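/- Assume |X_i| < add(d⁰(V)) for all i. For every k ∈ ω, every trimmed tree T ∈ V, and every Y ∈ d⁰(V), there exists a trimmed tree P ∈ V with [P] ⊆ [T], [P] ∩ Y = ∅, and the first k+1 elements of the splitting set of P coincide with the first k+1 elements of the splitting set of T. -/

import Mathlib

open Set Cardinal

/-- The set of branches of the trimmed tree `T[A,α]`:
all `β` agreeing with `α` outside of `A`. -/
def branches (X : ℕ → Type) (A : Set ℕ) (α : ∀ i, X i) : Set (∀ i, X i) :=
  {β | ∀ n ∉ A, β n = α n}

/-- The family `V` of branch sets of trimmed trees. -/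
def treeV (X : ℕ → Type) : Set (Set (∀ i, X i)) :=
  {S | ∃ A α, A.Infinite ∧ S = branches X A α}

/-- `[T]*`: all `β` agreeing with `α` outside of `A`, up to finitely many exceptions. -/
def starBranches (X : ℕ → Type) (A : Set ℕ) (α : ∀ i, X i) : Set (∀ i, X i) :=
  {β | {n | n ∉ A ∧ β n ≠ α n}.Finite}

/-- The family `V*`. -/
def treeVstar (X : ℕ → Type) : Set (Set (∀ i, X i)) :=
  {S | ∃ A α, A.Infinite ∧ S = starBranches X A α}

/-- The ideal `d⁰(F)`. -/
def d0 {X : ℕ → Type} (F : Set (Set (∀ i, X i))) : Set (Set (∀ i, X i)) :=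
  {Y | ∀ W ∈ F, ∃ U ∈ F, U ⊆ W ∧ U ∩ Y = ∅}

/-- `α_s`: overwrite `α` by `s` on `{0,…,n-1}`. -/
def modifySeq (X : ℕ → Type) (n : ℕ) (s α : ∀ i, X i) : ∀ i, X i :=
  fun i => if i < n then s i else α i

/-- `add(d⁰(V))`: the least cardinality of a subfamily of `d⁰(V)` whose union
is not in `d⁰(V)`. -/
noncomputable def addd0 (X : ℕ → Type) : Cardinal :=
  sInf {c | ∃ G : Set (Set (∀ i, X i)), G ⊆ d0 (treeV X) ∧ ⋃₀ G ∉ d0 (treeV X) ∧ c = #G}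

lemma self_mem_branches (X : ℕ → Type) (A : Set ℕ) (α : ∀ i, X i) :
    α ∈ branches X A α := fun _ _ => rfl

lemma branches_sub (X : ℕ → Type) [∀ i, Nontrivial (X i)] {D C : Set ℕ} {δ γ : ∀ i, X i}
    (h : branches X D δ ⊆ branches X C γ) :
    D ⊆ C ∧ ∀ n ∉ C, δ n = γ n := by
  have hδ : ∀ n ∉ C, δ n = γ n := h (self_mem_branches X D δ)
  refine ⟨fun n hn => ?_, hδ⟩
  by_contra hnc
  obtain ⟨y, hy⟩ := exists_ne (δ n)
  have hβ : Function.update δ n y ∈ branches X D δ := by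
    intro j hj
    rw [Function.update_of_ne]
    rintro rfl; exact hj hn
  have h1 := h hβ n hnc
  rw [Function.update_self] at h1
  exact hy (h1.trans (hδ n hnc).symm)

lemma union_mem_d0 (X : ℕ → Type) {Y Z : Set (∀ i, X i)}
    (hY : Y ∈ d0 (treeV X)) (hZ : Z ∈ d0 (treeV X)) : Y ∪ Z ∈ d0 (treeV X) := by
  intro W hW
  obtain ⟨U, hU, hUW, hUY⟩ := hY W hW
  obtain ⟨U', hU', hU'U, hU'Z⟩ := hZ U hU
  refine ⟨U', hU', hU'U.trans hUW, ?_⟩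
  rw [Set.inter_union_distrib_left, hU'Z, Set.union_empty]
  exact Set.eq_empty_of_subset_empty (hUY ▸ Set.inter_subset_inter_left Y hU'U)

lemma empty_mem_d0 (X : ℕ → Type) : (∅ : Set (∀ i, X i)) ∈ d0 (treeV X) :=
  fun W hW => ⟨W, hW, subset_rfl, Set.inter_empty W⟩

lemma finite_sUnion_mem_d0 (X : ℕ → Type) {G : Set (Set (∀ i, X i))} (hG : G.Finite)
    (h : G ⊆ d0 (treeV X)) : ⋃₀ G ∈ d0 (treeV X) := by
  revert h
  refine Set.Finite.induction_on G hG (motive := fun s _ => s ⊆ d0 (treeV X) → ⋃₀ s ∈ d0 (treeV X)) (fun _ => by simpa using empty_mem_d0 X) ?_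
  intro a s ha hs ih h
  rw [Set.sUnion_insert]
  exact union_mem_d0 X (h (Set.mem_insert a s))
    (fun W hW => ih (fun t ht => h (Set.mem_insert_of_mem a ht)) W hW)

lemma aleph0_le_addd0_of_lt (X : ℕ → Type) {c : Cardinal} (hc : c < addd0 X) :
    ℵ₀ ≤ addd0 X := by
  by_cases hne : {c | ∃ G : Set (Set (∀ i, X i)),
      G ⊆ d0 (treeV X) ∧ ⋃₀ G ∉ d0 (treeV X) ∧ c = #G}.Nonempty
  · refine le_csInf hne ?_
    rintro b ⟨G, hGsub, hGU, rfl⟩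
    by_contra hb
    push_neg at hb
    rw [lt_aleph0_iff_set_finite] at hb
    exact hGU (finite_sUnion_mem_d0 X hb hGsub)
  · rw [Set.not_nonempty_iff_eq_empty] at hne
    have : addd0 X = 0 := by rw [addd0, hne, Cardinal.sInf_empty]
    rw [this] at hc
    exact absurd hc (Cardinal.zero_le c).not_gt

lemma sUnion_mem_d0_of_lt (X : ℕ → Type) {G : Set (Set (∀ i, X i))}
    (hGsub : G ⊆ d0 (treeV X)) (hlt : #G < addd0 X) : ⋃₀ G ∈ d0 (treeV X) := by
  by_contra h
  have hmem : #G ∈ {c | ∃ G' : Set (Set (∀ i, X i)),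
      G' ⊆ d0 (treeV X) ∧ ⋃₀ G' ∉ d0 (treeV X) ∧ c = #G'} := ⟨G, hGsub, h, rfl⟩
  exact absurd (csInf_le (OrderBot.bddBelow _) hmem) hlt.not_ge

lemma preimage_mem_d0 (X : ℕ → Type) [∀ i, Nontrivial (X i)] (m : ℕ) (s : ∀ i, X i)
    {Y : Set (∀ i, X i)} (hY : Y ∈ d0 (treeV X)) :
    (modifySeq X m s) ⁻¹' Y ∈ d0 (treeV X) := by
  rintro W ⟨C, γ, hC, rfl⟩
  have hW : branches X (C \ {n | n < m}) (modifySeq X m s γ) ∈ treeV X :=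
    ⟨_, _, hC.diff (Set.finite_lt_nat m), rfl⟩
  obtain ⟨U', ⟨D, δ, hD, rfl⟩, hsub, hdisj⟩ := hY _ hW
  obtain ⟨hDC, hδ⟩ := branches_sub X hsub
  refine ⟨branches X D (modifySeq X m γ δ), ⟨D, _, hD, rfl⟩, ?_, ?_⟩
  · intro β hβ n hn
    have hnD : n ∉ D := fun h => hn ((hDC h).1)
    have h1 := hβ n hnD
    by_cases hnm : n < m
    · rw [h1]; simp [modifySeq, hnm]
    · have h2 := hδ n (fun h => hn h.1)
      rw [h1]
      simp only [modifySeq, if_neg hnm] at h2 ⊢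
      rw [h2]
  · rw [Set.eq_empty_iff_forall_notMem]
    rintro β ⟨hβ, hβY⟩
    have : modifySeq X m s β ∈ branches X D δ := by
      intro n hn
      by_cases hnm : n < m
      · have h2 := hδ n (fun h => h.2 hnm)
        simp only [modifySeq, if_pos hnm] at h2 ⊢
        rw [h2]
      · have h1 := hβ n hn
        simp only [modifySeq, if_neg hnm] at h1 ⊢
        rw [h1]
    have := Set.eq_empty_iff_forall_notMem.1 hdisj (modifySeq X m s β) ⟨this, hβY⟩
    exact this

lemma nth_eq_of_agree {A B : Set ℕ} (hA : A.Infinite) (hB : B.Infinite) {m : ℕ}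
    (hag : ∀ n < m, (n ∈ A ↔ n ∈ B)) {k : ℕ} (hk : Nat.nth (· ∈ A) k < m) :
    ∀ j ≤ k, Nat.nth (· ∈ B) j = Nat.nth (· ∈ A) j := by
  classical
  intro j hj
  have hA' : (setOf (· ∈ A)).Infinite := hA
  have hB' : (setOf (· ∈ B)).Infinite := hB
  set n := Nat.nth (· ∈ A) j with hn
  have hnm : n < m := lt_of_le_of_lt ((Nat.nth_le_nth hA').2 hj) hk
  have hpA : n ∈ A := Nat.nth_mem_of_infinite hA' j
  have hcA : Nat.count (· ∈ A) n = j := by rw [hn]; exact Nat.count_nth_of_infinite hA' j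
  have hpB : n ∈ B := (hag n hnm).1 hpA
  have hcB : Nat.count (· ∈ B) n = j := by
    rw [← hcA, Nat.count_eq_card_filter_range, Nat.count_eq_card_filter_range]
    congr 1
    apply Finset.filter_congr
    intro x hx
    simp only [Finset.mem_range] at hx
    simpa using (hag x (hx.trans hnm)).symm
  rw [← hcB]
  exact Nat.nth_count hpB

lemma pi_fin_lt {κ : Cardinal} (hκ : ℵ₀ ≤ κ) :
    ∀ (m : ℕ) (f : ℕ → Type), (∀ i, #(f i) < κ) → #(∀ i : Fin m, f i) < κ := by
  intro m
  induction m with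
  | zero =>
      intro f hf
      have : #(∀ i : Fin 0, f i) = 1 := Cardinal.mk_eq_one _
      rw [this]
      exact lt_of_lt_of_le one_lt_aleph0 hκ
  | succ n ih =>
      intro f hf
      have e : (f 0 × ∀ i : Fin n, f (i.succ : Fin (n+1))) ≃ (∀ i : Fin (n+1), f i) :=
        Fin.consEquiv (fun i : Fin (n+1) => f i)
      rw [← Cardinal.mk_congr e, Cardinal.mk_prod]
      simp only [Cardinal.lift_id]
      exact Cardinal.mul_lt_of_lt hκ (hf 0) (ih (fun i => f (i + 1)) (fun i => hf (i + 1)))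

theorem stmt8 (X : ℕ → Type) [∀ i, Nontrivial (X i)]
    (hadd : ∀ i, #(X i) < addd0 X)
    (k : ℕ) (A : Set ℕ) (hA : A.Infinite) (α : ∀ i, X i)
    (Y : Set (∀ i, X i)) (hY : Y ∈ d0 (treeV X)) :
    ∃ (B : Set ℕ) (β : ∀ i, X i), B.Infinite ∧
      branches X B β ⊆ branches X A α ∧
      branches X B β ∩ Y = ∅ ∧
      ∀ j ≤ k, Nat.nth (· ∈ B) j = Nat.nth (· ∈ A) j := by
  classical
  have hκ : ℵ₀ ≤ addd0 X := aleph0_le_addd0_of_lt X (hadd 0)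
  set m : ℕ := Nat.nth (· ∈ A) k + 1 with hm
  -- extend a Fin m tuple to a full sequence
  set ext : (∀ i : Fin m, X i) → ∀ i, X i :=
    fun t i => if h : i < m then t ⟨i, h⟩ else α i with hext
  set G : Set (Set (∀ i, X i)) :=
    Set.range (fun t : ∀ i : Fin m, X i => (modifySeq X m (ext t)) ⁻¹' Y) with hG
  have hGsub : G ⊆ d0 (treeV X) := by
    rintro _ ⟨t, rfl⟩
    exact preimage_mem_d0 X m (ext t) hY
  have hGcard : #G < addd0 X :=
    lt_of_le_of_lt (Cardinal.mk_range_le) (pi_fin_lt hκ m X hadd)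
  have hZ : ⋃₀ G ∈ d0 (treeV X) := sUnion_mem_d0_of_lt X hGsub hGcard
  have hA' : (A \ {n | n < m}).Infinite := hA.diff (Set.finite_lt_nat m)
  obtain ⟨U, ⟨D, δ, hD, rfl⟩, hsub, hdisj⟩ :=
    hZ (branches X (A \ {n | n < m}) α) ⟨_, _, hA', rfl⟩
  obtain ⟨hDA, hδ⟩ := branches_sub X hsub
  refine ⟨D ∪ (A ∩ {n | n < m}), δ, hD.mono Set.subset_union_left, ?_, ?_, ?_⟩
  · -- subset
    intro β hβ n hn
    have hnB : n ∉ D ∪ (A ∩ {n | n < m}) := by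
      rintro (h | h)
      · exact hn (hDA h).1
      · exact hn h.1
    rw [hβ n hnB]
    exact hδ n (fun h => hn h.1)
  · -- disjoint from Y
    rw [Set.eq_empty_iff_forall_notMem]
    rintro β ⟨hβ, hβY⟩
    set t : ∀ i : Fin m, X i := fun i => β i with ht
    set βt : ∀ i, X i := fun n => if n < m then δ n else β n with hβt
    have hβtD : βt ∈ branches X D δ := by
      intro n hn
      by_cases hnm : n < m
      · simp [hβt, if_pos hnm]
      · have hnB : n ∉ D ∪ (A ∩ {i | i < m}) := by
          rintro (h | h)
          · exact hn h
          · exact hnm h.2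
        simp only [hβt, if_neg hnm]
        exact hβ n hnB
    have hmod : modifySeq X m (ext t) βt = β := by
      funext i
      by_cases him : i < m
      · simp [modifySeq, if_pos him, hext, him, ht]
      · simp [modifySeq, if_neg him, hβt, if_neg him]
    have hβtG : βt ∈ ⋃₀ G := by
      refine ⟨(modifySeq X m (ext t)) ⁻¹' Y, ⟨t, rfl⟩, ?_⟩
      simp only [Set.mem_preimage, hmod]
      exact hβY
    exact Set.eq_empty_iff_forall_notMem.1 hdisj βt ⟨hβtD, hβtG⟩
  · -- nth agreement
    have hag : ∀ n < m, (n ∈ A ↔ n ∈ D ∪ (A ∩ {i | i < m})) := by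
      intro n hn
      constructor
      · intro h; exact Or.inr ⟨h, hn⟩
      · rintro (h | h)
        · exact (hDA h).1
        · exact h.1
    have hB : (D ∪ (A ∩ {n | n < m})).Infinite := hD.mono Set.subset_union_left
    exact nth_eq_of_agree hA hB hag (Nat.lt_succ_self _)
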